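/- arXiv:2108.03882 — 3 statements merged into one kernel-verified Lean document; each statement's English description precedes it below -/
import Mathlib

section
/- Let K be the graph on k+2 vertices w_1, ..., w_{k+2} obtained from the complete graph by deleting the edges (w_1,w_2), (w_2,w_3), and (w_3,w_4), where k ≥ 2. Then every proper k-coloring of K assigns different colors to w_2 and w_3. -/
/-- The gadget graph `K`: the complete graph on `k + 2` vertices `w_1, …, w_{k+2}`
(here indexed `0, …, k+1`, with `w_i` corresponding to `i - 1`) minus the edges
`{w_1, w_2}`, `{w_2, w_3}` and `{w_3, w_4}`. -/
def Kgraph (k : ℕ) : SimpleGraph (Fin (k + 2)) :=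
  (SimpleGraph.completeGraph (Fin (k + 2))).deleteEdges {s(0, 1), s(1, 2), s(2, 3)}

lemma Kgraph_adj_aux (k : ℕ) (hk : 2 ≤ k) (a b : Fin (k + 2))
    (hcond : a.val + 1 < b.val ∨ b.val + 1 < a.val ∨
      (3 ≤ a.val ∧ 3 ≤ b.val ∧ a.val ≠ b.val)) :
    (Kgraph k).Adj a b := by
  have h0 : (0 : Fin (k+2)).val = 0 := rfl
  have h1 : (1 : Fin (k+2)).val = 1 := rfl
  have h2 : (2 : Fin (k+2)).val = 2 := by
    have e : (2 : Fin (k+2)).val = 2 % (k+2) := rfl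
    rw [e, Nat.mod_eq_of_lt (by omega)]
  have h3 : (3 : Fin (k+2)).val = 3 := by
    have e : (3 : Fin (k+2)).val = 3 % (k+2) := rfl
    rw [e, Nat.mod_eq_of_lt (by omega)]
  constructor
  · intro hc; have := congrArg Fin.val hc; omega
  · intro hadj
    rw [SimpleGraph.fromEdgeSet_adj] at hadj
    obtain ⟨hm, -⟩ := hadj
    simp only [Set.mem_insert_iff, Set.mem_singleton_iff, Sym2.eq_iff] at hm
    rcases hm with (⟨e1,e2⟩|⟨e1,e2⟩)|(⟨e1,e2⟩|⟨e1,e2⟩)|(⟨e1,e2⟩|⟨e1,e2⟩) <;>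
      (have := congrArg Fin.val e1; have := congrArg Fin.val e2; omega)

theorem stmt_11 (k : ℕ) (hk : 2 ≤ k) (C : (Kgraph k).Coloring (Fin k)) :
    C 1 ≠ C 2 := by
  intro h
  have h0 : (0 : Fin (k+2)).val = 0 := rfl
  have h1 : (1 : Fin (k+2)).val = 1 := rfl
  have h2 : (2 : Fin (k+2)).val = 2 := by
    have e : (2 : Fin (k+2)).val = 2 % (k+2) := rfl
    rw [e, Nat.mod_eq_of_lt (by omega)]
  set g : Fin k → Fin (k + 2) := fun j => if j.val = 0 then 0 else ⟨j.val + 2, by omega⟩ with hg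
  have hval : ∀ j : Fin k, (g j).val = if j.val = 0 then 0 else j.val + 2 := by
    intro j
    by_cases hj : j.val = 0 <;> simp [hg, hj]
  have hadj : ∀ a b : Fin k, a ≠ b → (Kgraph k).Adj (g a) (g b) := by
    intro a b hab
    have hav := hval a
    have hbv := hval b
    have habv : a.val ≠ b.val := fun hc => hab (Fin.ext hc)
    apply Kgraph_adj_aux k hk
    rcases eq_or_ne a.val 0 with h' | h' <;> rcases eq_or_ne b.val 0 with h'' | h'' <;>
      simp [h', h''] at hav hbv <;> omega
  have hinj : Function.Injective (C ∘ g) := by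
    intro a b hcab
    by_contra hne
    exact C.valid (hadj a b hne) hcab
  have hsurj : Function.Surjective (C ∘ g) := Finite.surjective_of_injective hinj
  obtain ⟨j, hj⟩ := hsurj (C 1)
  rcases eq_or_ne j.val 0 with hj0 | hj0
  · have hgj : g j = 0 := by
      apply Fin.ext; rw [hval j]; simp [hj0, h0]
    rw [Function.comp_apply, hgj] at hj
    exact C.valid (Kgraph_adj_aux k hk 0 2 (by omega)) (hj.trans h)
  · have hgv : (g j).val = j.val + 2 := by rw [hval j]; simp [hj0]
    exact C.valid (Kgraph_adj_aux k hk (g j) 1 (by omega)) hj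
end

section
/- Let K be the complete graph on k+2 vertices w_1,...,w_{k+2} minus edges {w_1,w_2}, {w_2,w_3}, {w_3,w_4}, with k ≥ 2. For any assignment of (possibly equal) colors from a palette of k colors to w_2 and w_3: if the colors are distinct, the assignment extends to a proper k-coloring of K; if the colors are equal, any k-coloring of K extending the assignment has at least one monochromatic edge, and there exists an extension with exactly one monochromatic edge. -/
namespace Stmt12Aux
variable {k : ℕ}

lemma val0 : ((0 : Fin (k+2)) : ℕ) = 0 := rfl
lemma val1 : ((1 : Fin (k+2)) : ℕ) = 1 := by
  show 1 % (k+2) = 1; exact Nat.mod_eq_of_lt (by omega)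
lemma val2 (hk : 2 ≤ k) : ((2 : Fin (k+2)) : ℕ) = 2 := by
  show 2 % (k+2) = 2; exact Nat.mod_eq_of_lt (by omega)
lemma val3 (hk : 2 ≤ k) : ((3 : Fin (k+2)) : ℕ) = 3 := by
  show 3 % (k+2) = 3; exact Nat.mod_eq_of_lt (by omega)

lemma kgraph_adj (hk : 2 ≤ k) {u v : Fin (k+2)} :
    (Kgraph k).Adj u v ↔ (u:ℕ) ≠ (v:ℕ) ∧
      ¬((u:ℕ) = 0 ∧ (v:ℕ) = 1) ∧ ¬((u:ℕ) = 1 ∧ (v:ℕ) = 0) ∧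
      ¬((u:ℕ) = 1 ∧ (v:ℕ) = 2) ∧ ¬((u:ℕ) = 2 ∧ (v:ℕ) = 1) ∧
      ¬((u:ℕ) = 2 ∧ (v:ℕ) = 3) ∧ ¬((u:ℕ) = 3 ∧ (v:ℕ) = 2) := by
  simp only [Kgraph, SimpleGraph.deleteEdges_adj, SimpleGraph.completeGraph_eq_top,
    SimpleGraph.top_adj, Set.mem_insert_iff, Set.mem_singleton_iff, Sym2.eq_iff, not_or,
    ne_eq, Fin.ext_iff, val0, val1, val2 hk, val3 hk, not_and_or]
  omega

lemma adj02 (hk : 2 ≤ k) : (Kgraph k).Adj (0 : Fin (k+2)) 2 := by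
  rw [kgraph_adj hk, val0, val2 hk]; omega

def g1 (hk : 2 ≤ k) (i : Fin (k+2)) : Fin k :=
  if (i:ℕ) ≤ 1 then ⟨0, by omega⟩ else if (i:ℕ) ≤ 3 then ⟨1, by omega⟩
  else ⟨(i:ℕ) - 2, by omega⟩

lemma g1_eq (hk : 2 ≤ k) {u v : Fin (k+2)} :
    g1 hk u = g1 hk v ↔
      ((u:ℕ) ≤ 1 ∧ (v:ℕ) ≤ 1) ∨ (2 ≤ (u:ℕ) ∧ (u:ℕ) ≤ 3 ∧ 2 ≤ (v:ℕ) ∧ (v:ℕ) ≤ 3)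
        ∨ (u:ℕ) = (v:ℕ) := by
  unfold g1
  split_ifs <;> simp only [Fin.mk.injEq, true_iff, iff_true, Fin.mk_eq_mk] <;>
    first
      | omega
      | (constructor
         · intro h'; omega
         · intro h'; omega)

def g2 (hk : 2 ≤ k) (i : Fin (k+2)) : Fin k :=
  if (i:ℕ) ≤ 2 then ⟨0, by omega⟩ else ⟨(i:ℕ) - 2, by omega⟩

lemma g2_eq (hk : 2 ≤ k) {u v : Fin (k+2)} :
    g2 hk u = g2 hk v ↔ ((u:ℕ) ≤ 2 ∧ (v:ℕ) ≤ 2) ∨ (u:ℕ) = (v:ℕ) := by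
  unfold g2
  split_ifs <;> simp only [Fin.mk.injEq, true_iff, iff_true, Fin.mk_eq_mk] <;>
    first
      | omega
      | (constructor
         · intro h'; omega
         · intro h'; omega)

def emb (hk : 2 ≤ k) (j : Fin k) : Fin (k+2) :=
  if (j:ℕ) = 0 then 0 else ⟨(j:ℕ) + 2, by omega⟩

lemma emb_val (hk : 2 ≤ k) (j : Fin k) :
    ((emb hk j : ℕ) = 0 ∧ (j:ℕ) = 0) ∨ ((emb hk j : ℕ) = (j:ℕ) + 2 ∧ (j:ℕ) ≠ 0) := by
  unfold emb
  split_ifs with h <;> simp [h, val0]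

end Stmt12Aux

set_option maxHeartbeats 1000000 in
open Stmt12Aux in
theorem stmt_12 (k : ℕ) (hk : 2 ≤ k) (c₂ c₃ : Fin k) :
    (c₂ ≠ c₃ → ∃ C : (Kgraph k).Coloring (Fin k), C 1 = c₂ ∧ C 2 = c₃) ∧
      (c₂ = c₃ →
        (∀ f : Fin (k + 2) → Fin k, f 1 = c₂ → f 2 = c₃ →
          ∃ e ∈ (Kgraph k).edgeSet, ∃ u v, e = s(u, v) ∧ f u = f v) ∧
        (∃ f : Fin (k + 2) → Fin k, f 1 = c₂ ∧ f 2 = c₃ ∧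
          {e ∈ (Kgraph k).edgeSet | ∃ u v, e = s(u, v) ∧ f u = f v}.ncard = 1)) := by
  constructor
  · -- distinct colors: proper coloring exists
    intro hne
    have h01 : (⟨0, by omega⟩ : Fin k) ≠ ⟨1, by omega⟩ := by simp
    set σ := Equiv.swap (⟨0, by omega⟩ : Fin k) c₂ with hσ
    have hd : σ ⟨1, by omega⟩ ≠ c₂ := by
      intro h
      have := σ.injective (a₁ := ⟨1, by omega⟩) (a₂ := ⟨0, by omega⟩)
        (by rw [h, hσ, Equiv.swap_apply_left])
      exact h01 this.symm
    set τ := Equiv.swap (σ ⟨1, by omega⟩) c₃ with hτ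
    set π := σ.trans τ with hπ
    have hπ0 : π ⟨0, by omega⟩ = c₂ := by
      rw [hπ]; simp only [Equiv.trans_apply, hσ, Equiv.swap_apply_left, hτ]
      exact Equiv.swap_apply_of_ne_of_ne (Ne.symm hd) hne
    have hπ1 : π ⟨1, by omega⟩ = c₃ := by
      rw [hπ]; simp only [Equiv.trans_apply, hτ, Equiv.swap_apply_left]
    refine ⟨SimpleGraph.Coloring.mk (fun i => π (g1 hk i)) ?_, ?_, ?_⟩
    · intro u v hadj
      rw [kgraph_adj hk] at hadj
      simp only [ne_eq, EmbeddingLike.apply_eq_iff_eq, g1_eq hk]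
      omega
    · show π (g1 hk 1) = c₂
      have h : g1 hk 1 = ⟨0, by omega⟩ := by simp [g1, val1]
      rw [h, hπ0]
    · show π (g1 hk 2) = c₃
      have h : g1 hk 2 = ⟨1, by omega⟩ := by simp [g1, val2 hk, Nat.mod_eq_of_lt (show 2 < k + 2 by omega)]
      rw [h, hπ1]
  · intro heq
    constructor
    · -- every extension has a monochromatic edge
      intro f h1 h2
      by_contra hcon
      push_neg at hcon
      have hprop : ∀ u v : Fin (k+2), (Kgraph k).Adj u v → f u ≠ f v := by
        intro u v h
        exact hcon s(u,v) ((Kgraph k).mem_edgeSet.2 h) u v rfl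
      have hinj : Function.Injective (fun j => f (emb hk j)) := by
        intro a b hab
        by_contra hne
        refine hprop (emb hk a) (emb hk b) ?_ hab
        rw [kgraph_adj hk]
        have hab' : (a:ℕ) ≠ (b:ℕ) := fun h => hne (Fin.ext h)
        rcases emb_val hk a with ⟨ha, ha'⟩ | ⟨ha, ha'⟩ <;>
          rcases emb_val hk b with ⟨hb, hb'⟩ | ⟨hb, hb'⟩ <;> omega
      obtain ⟨j, hj⟩ := Finite.injective_iff_surjective.mp hinj (f 1)
      simp only at hj
      have hj0 : (j:ℕ) = 0 := by
        by_contra h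
        refine hprop 1 (emb hk j) ?_ hj.symm
        rw [kgraph_adj hk, val1]
        rcases emb_val hk j with ⟨ha, ha'⟩ | ⟨ha, ha'⟩ <;> omega
      have hembj : emb hk j = 0 := by
        rcases emb_val hk j with ⟨ha, ha'⟩ | ⟨ha, ha'⟩
        · exact Fin.ext (by rw [ha, val0])
        · omega
      rw [hembj] at hj
      exact hprop 0 2 (adj02 hk) (by rw [hj, h1, heq, h2])
    · -- extension with exactly one monochromatic edge
      set σ := Equiv.swap (⟨0, by omega⟩ : Fin k) c₂ with hσ
      have hg1 : g2 hk (1 : Fin (k+2)) = ⟨0, by omega⟩ := by simp [g2, val1]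
      have hg2 : g2 hk (2 : Fin (k+2)) = ⟨0, by omega⟩ := by simp [g2, val2 hk, Nat.mod_eq_of_lt (show 2 < k + 2 by omega)]
      have hg0 : g2 hk (0 : Fin (k+2)) = ⟨0, by omega⟩ := by simp [g2, val0]
      refine ⟨fun i => σ (g2 hk i), ?_, ?_, ?_⟩
      · simp only [hg1, hσ, Equiv.swap_apply_left]
      · simp only [hg2, hσ, Equiv.swap_apply_left, ← heq]
      · have hset : {e ∈ (Kgraph k).edgeSet |
              ∃ u v, e = s(u, v) ∧ σ (g2 hk u) = σ (g2 hk v)}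
            = {s((0 : Fin (k+2)), 2)} := by
          ext e
          induction e using Sym2.ind with
          | _ x y =>
            simp only [Set.mem_setOf_eq, Set.mem_singleton_iff, SimpleGraph.mem_edgeSet,
              Sym2.eq_iff]
            constructor
            · rintro ⟨hadj, u, v, huv, hfe⟩
              have hxy : σ (g2 hk x) = σ (g2 hk y) := by
                rcases huv with ⟨rfl, rfl⟩ | ⟨rfl, rfl⟩
                · exact hfe
                · exact hfe.symm
              simp only [EmbeddingLike.apply_eq_iff_eq, g2_eq hk] at hxy
              rw [kgraph_adj hk] at hadj
              simp only [Fin.ext_iff, val0, val2 hk]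
              omega
            · rintro (⟨rfl, rfl⟩ | ⟨rfl, rfl⟩)
              · exact ⟨adj02 hk, 0, 2, Or.inl ⟨rfl, rfl⟩, by rw [hg0, hg2]⟩
              · exact ⟨(adj02 hk).symm, 2, 0, Or.inl ⟨rfl, rfl⟩, by rw [hg0, hg2]⟩
        rw [hset, Set.ncard_singleton]
end

section
/- Let G = (V,E) be a simple graph with at most n^2 edges (n = |V|), partitioned by a coloring into a black independent set I of size at least 2 and white vertices, inside the augmented graph G' (G plus a fully connected clique C of n^2 vertices all colored white). Then the optimal value of the MaxIS-derived bound satisfies: opt_{IS}(G)·n^2 ≤ (number of edges of G' covered by the best such coloring), where opt_{IS}(G) is the maximum size of an independent set in G. -/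
/-- The augmented graph `G'`: the graph `G` together with a clique `C` of `n^2`
new vertices, where every vertex of `C` is adjacent to every vertex of `G`. -/
def augGraph {V : Type*} (G : SimpleGraph V) (n : ℕ) : SimpleGraph (V ⊕ Fin (n ^ 2)) where
  Adj x y :=
    match x, y with
    | .inl a, .inl b => G.Adj a b
    | .inl _, .inr _ => True
    | .inr _, .inl _ => True
    | .inr a, .inr b => a ≠ b
  symm := by
    constructor
    rintro (a | a) (b | b) h <;> simp_all
    · exact h.symm
    · exact fun hh => h hh.symm
  loopless := by
    constructor
    rintro (a | a) h <;> simp_all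


theorem stmt_19 {V : Type*} [Fintype V] (G : SimpleGraph V) (n : ℕ)
    (hcard : Fintype.card V = n) (hE : G.edgeSet.ncard ≤ n ^ 2)
    (I : Set V) (hI : ∀ a ∈ I, ∀ b ∈ I, ¬ G.Adj a b)
    (hmaxI : ∀ J : Set V, (∀ a ∈ J, ∀ b ∈ J, ¬ G.Adj a b) → J.ncard ≤ I.ncard)
    (h2 : 2 ≤ I.ncard) :
    ∃ S : Set (V ⊕ Fin (n ^ 2)),
      (∀ a ∈ S, ∀ b ∈ S, ¬ (augGraph G n).Adj a b) ∧
        I.ncard * n ^ 2 ≤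
          {e ∈ (augGraph G n).edgeSet | ∃ x ∈ e, x ∈ S}.ncard := by
  classical
  refine ⟨Sum.inl '' I, ?_, ?_⟩
  · rintro _ ⟨a, ha, rfl⟩ _ ⟨b, hb, rfl⟩ hadj
    exact hI a ha b hb hadj
  · set f : V × Fin (n ^ 2) → Sym2 (V ⊕ Fin (n ^ 2)) :=
      fun p => s(Sum.inl p.1, Sum.inr p.2) with hf
    have hinj : Set.InjOn f (I ×ˢ (Set.univ : Set (Fin (n ^ 2)))) := by
      rintro ⟨a, c⟩ _ ⟨b, d⟩ _ h
      simp only [f, Sym2.eq, Sym2.rel_iff', Prod.mk.injEq, Prod.swap_prod_mk] at h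
      rcases h with ⟨h1, h2⟩ | ⟨h1, h2⟩
      · simp_all
      · exact absurd h1 (by simp)
    have hsub : f '' (I ×ˢ Set.univ) ⊆
        {e ∈ (augGraph G n).edgeSet | ∃ x ∈ e, x ∈ Sum.inl '' I} := by
      rintro _ ⟨⟨a, c⟩, ⟨ha, -⟩, rfl⟩
      refine ⟨trivial, Sum.inl a, ?_, ⟨a, ha, rfl⟩⟩
      simp [f]
    have hprod : (I ×ˢ (Set.univ : Set (Fin (n ^ 2)))).ncard = I.ncard * n ^ 2 := by
      rw [Set.ncard_eq_toFinset_card', Set.ncard_eq_toFinset_card' I]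
      simp [Set.toFinset_prod, Finset.card_product]
    calc I.ncard * n ^ 2 = (f '' (I ×ˢ Set.univ)).ncard := by
          rw [Set.ncard_image_of_injOn hinj, hprod]
      _ ≤ _ := Set.ncard_le_ncard hsub (Set.toFinite _)
end
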